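/- For a Drinfeld 𝔽_q[t]-module ρ of rank r defined over k̄, the pre-t-motive M_ρ is a simple left k̄(t)[σ,σ^{−1}]-module. -/

import Mathlib

/-!
Statement 5 (Chang–Papanikolas, Corollary 2.5.2 / 3.3.3): For a Drinfeld 𝔽q[t]-module ρ of
rank r defined over k̄ (with ρ_t = θ + κ₁τ + ⋯ + κ_rτ^r, κ_r = 1), the pre-t-motive M_ρ is a
simple left k̄(t)[σ,σ^{-1}]-module.

M_ρ is the r-dimensional k̄(t)-vector space with σ acting on the standard basis 𝐦 by
σ𝐦 = Φ_ρ𝐦 and σ(c x) = c^{(-1)} σ(x); in coordinates σ sends the coordinate vector v of x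
to Φ_ρᵀ · (σ_K v), where σ_K is the inverse-twisting automorphism f ↦ f^{(-1)} of k̄(t).
Simplicity is expressed as: every k̄(t)-subspace W with σ(W) = W is 0 or everything
(a σ-stable subspace is exactly a k̄(t)[σ,σ^{-1}]-submodule).
-/

set_option synthInstance.maxHeartbeats 1000000
set_option maxHeartbeats 1000000

noncomputable section
open scoped BigOperators

/-- The matrix `Φ_ρ` of the `σ`-action on the pre-t-motive `M_ρ` of a Drinfeld module with
`ρ_t = θ + κ₁τ + ⋯ + κ_{r}τ^{r}`, `κ_r = 1`:  superdiagonal `1`'s, last row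
`((t−θ), −κ₁^{(−1)}, …, −κ_{r−1}^{(−r+1)})`.  Here `κtw j` is the `(j+1)`-fold inverse twist
`κ_{j+1}^{(−(j+1))}` of `κ_{j+1}`. -/
def PhiRho {Kb : Type*} [Field Kb] (r : ℕ) (θ : Kb) (κtw : Fin r → Kb) :
    Matrix (Fin r) (Fin r) (RatFunc Kb) := fun i j =>
  if i.1 + 1 = j.1 then 1
  else if i.1 = r - 1 then
    (if j.1 = 0 then RatFunc.X - RatFunc.C θ
     else - RatFunc.C (κtw ⟨j.1 - 1, lt_of_le_of_lt (Nat.sub_le _ _) j.2⟩))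
  else 0

namespace Statement5Aux

open RatFunc

variable {Kb : Type} [Field Kb]

/-- `X - C θ` as a rational function is the image of the polynomial `X - C θ`. -/
lemma Xθ_eq (θ : Kb) : (RatFunc.X - RatFunc.C θ : RatFunc Kb) =
    algebraMap (Polynomial Kb) (RatFunc Kb) (Polynomial.X - Polynomial.C θ) := by
  rw [map_sub, RatFunc.algebraMap_X, RatFunc.algebraMap_C]

lemma Xθ_ne (θ : Kb) : (RatFunc.X - RatFunc.C θ : RatFunc Kb) ≠ 0 := by
  rw [Xθ_eq]
  exact RatFunc.algebraMap_ne_zero (Polynomial.X_sub_C_ne_zero θ)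

lemma Xθ_deg (θ : Kb) : (RatFunc.X - RatFunc.C θ : RatFunc Kb).intDegree = 1 := by
  rw [Xθ_eq, RatFunc.intDegree_polynomial, Polynomial.natDegree_X_sub_C]
  simp

lemma intDegree_div_polys (p q : Polynomial Kb) (hp : p ≠ 0) (hq : q ≠ 0) :
    (algebraMap (Polynomial Kb) (RatFunc Kb) p /
      algebraMap (Polynomial Kb) (RatFunc Kb) q).intDegree =
      (p.natDegree : ℤ) - q.natDegree := by
  have hq' := RatFunc.algebraMap_ne_zero (K := Kb) hq
  have hp' := RatFunc.algebraMap_ne_zero (K := Kb) hp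
  have hd : (algebraMap (Polynomial Kb) (RatFunc Kb) p /
      algebraMap (Polynomial Kb) (RatFunc Kb) q) ≠ 0 := div_ne_zero hp' hq'
  have h := RatFunc.intDegree_mul hd hq'
  rw [div_mul_cancel₀ _ hq', RatFunc.intDegree_polynomial, RatFunc.intDegree_polynomial] at h
  omega

/-- If `deg y < deg x` (or `y = 0`) then `x - y ≠ 0` and `deg (x - y) = deg x`. -/
lemma intDegree_sub_eq {x y : RatFunc Kb} (hx : x ≠ 0)
    (hy : y = 0 ∨ (y ≠ 0 ∧ y.intDegree < x.intDegree)) :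
    x - y ≠ 0 ∧ (x - y).intDegree = x.intDegree := by
  rcases hy with rfl | ⟨hy, hlt⟩
  · simpa using hx
  have hne : x - y ≠ 0 := by
    intro h
    rw [sub_eq_zero] at h
    subst h
    exact lt_irrefl _ hlt
  refine ⟨hne, le_antisymm ?_ ?_⟩
  · have h1 := RatFunc.intDegree_add_le (neg_ne_zero.2 hy) (by rwa [← sub_eq_add_neg])
    rw [← sub_eq_add_neg, RatFunc.intDegree_neg] at h1
    omega
  · have h2 := RatFunc.intDegree_add_le hy (by rw [sub_add_cancel]; exact hx)
    rw [sub_add_cancel] at h2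
    omega

open Classical in
/-- weighted degree of a coordinate: `r * deg x + i`, or `⊥` if `x = 0`. -/
def wdeg (r i : ℕ) (x : RatFunc Kb) : WithBot ℤ :=
  if x = 0 then ⊥ else ((r * x.intDegree + i : ℤ) : WithBot ℤ)

@[simp] lemma wdeg_zero (r i : ℕ) : wdeg r i (0 : RatFunc Kb) = ⊥ := by
  rw [wdeg, if_pos rfl]

lemma wdeg_of_ne (r i : ℕ) {x : RatFunc Kb} (hx : x ≠ 0) :
    wdeg r i x = ((r * x.intDegree + i : ℤ) : WithBot ℤ) := by
  rw [wdeg, if_neg hx]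

lemma wdeg_eq_bot_iff {r i : ℕ} {x : RatFunc Kb} : wdeg r i x = ⊥ ↔ x = 0 := by
  constructor
  · intro h
    by_contra hx
    rw [wdeg_of_ne _ _ hx] at h
    exact WithBot.coe_ne_bot h
  · intro h
    rw [h]
    exact wdeg_zero _ _

lemma wdeg_neg (r i : ℕ) (x : RatFunc Kb) : wdeg r i (-x) = wdeg r i x := by
  rcases eq_or_ne x 0 with rfl | h
  · simp
  · rw [wdeg_of_ne _ _ (neg_ne_zero.2 h), wdeg_of_ne _ _ h, RatFunc.intDegree_neg]

lemma wdeg_add_le (r i : ℕ) (x y : RatFunc Kb) :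
    wdeg r i (x + y) ≤ max (wdeg r i x) (wdeg r i y) := by
  rcases eq_or_ne (x + y) 0 with h | h
  · simp [h]
  rcases eq_or_ne x 0 with rfl | hx
  · rw [zero_add]
    exact le_max_right _ _
  rcases eq_or_ne y 0 with rfl | hy
  · rw [add_zero]
    exact le_max_left _ _
  have hle := RatFunc.intDegree_add_le hy h
  rw [wdeg_of_ne _ _ h, wdeg_of_ne _ _ hx, wdeg_of_ne _ _ hy, ← WithBot.coe_max,
    WithBot.coe_le_coe]
  have hr0 : (0 : ℤ) ≤ (r : ℤ) := Int.natCast_nonneg r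
  rcases le_max_iff.mp hle with h' | h'
  · exact le_max_of_le_left (by nlinarith)
  · exact le_max_of_le_right (by nlinarith)

lemma wdeg_smul (r i : ℕ) {c : RatFunc Kb} (hc : c ≠ 0) (x : RatFunc Kb) :
    wdeg r i (c * x) = ((r * c.intDegree : ℤ) : WithBot ℤ) + wdeg r i x := by
  rcases eq_or_ne x 0 with rfl | hx
  · simp
  · rw [wdeg_of_ne _ _ (mul_ne_zero hc hx), wdeg_of_ne _ _ hx,
      RatFunc.intDegree_mul hc hx, ← WithBot.coe_add]
    congr 1
    ring

/-- weighted degree of a vector. -/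
def D (r : ℕ) (v : Fin r → RatFunc Kb) : WithBot ℤ :=
  Finset.univ.sup fun i => wdeg r i.1 (v i)

lemma le_D {r : ℕ} (v : Fin r → RatFunc Kb) (i : Fin r) :
    wdeg r i.1 (v i) ≤ D r v :=
  Finset.le_sup (f := fun i : Fin r => wdeg r i.1 (v i)) (Finset.mem_univ i)

lemma D_le {r : ℕ} {v : Fin r → RatFunc Kb} {a : WithBot ℤ}
    (h : ∀ i : Fin r, wdeg r i.1 (v i) ≤ a) : D r v ≤ a :=
  Finset.sup_le fun i _ => h i

lemma D_eq_bot_iff {r : ℕ} {v : Fin r → RatFunc Kb} : D r v = ⊥ ↔ v = 0 := by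
  rw [D, Finset.sup_eq_bot_iff]
  constructor
  · intro h
    funext i
    exact wdeg_eq_bot_iff.mp (h i (Finset.mem_univ i))
  · intro h i _
    rw [h]
    exact wdeg_zero _ _

lemma D_exists {r : ℕ} (hr : 0 < r) (v : Fin r → RatFunc Kb) :
    ∃ i : Fin r, D r v = wdeg r i.1 (v i) := by
  haveI : Nonempty (Fin r) := ⟨⟨0, hr⟩⟩
  obtain ⟨i, _, h⟩ := Finset.exists_mem_eq_sup Finset.univ Finset.univ_nonempty
    (fun i : Fin r => wdeg r i.1 (v i))
  exact ⟨i, h⟩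

lemma D_neg {r : ℕ} (v : Fin r → RatFunc Kb) : D r (-v) = D r v := by
  unfold D
  congr 1
  funext i
  exact wdeg_neg _ _ _

lemma D_add_le {r : ℕ} (v w : Fin r → RatFunc Kb) :
    D r (v + w) ≤ max (D r v) (D r w) :=
  D_le fun i => (wdeg_add_le _ _ _ _).trans (max_le_max (le_D v i) (le_D w i))

lemma D_add_eq {r : ℕ} {v w : Fin r → RatFunc Kb} (h : D r v < D r w) :
    D r (v + w) = D r w := by
  refine le_antisymm ((D_add_le v w).trans_eq (max_eq_right h.le)) ?_
  have h2 : D r w ≤ max (D r (v + w)) (D r v) := by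
    have h3 := D_add_le (v + w) (-v)
    rw [D_neg] at h3
    have h4 : v + w + -v = w := by abel
    rwa [h4] at h3
  rcases le_max_iff.mp h2 with h' | h'
  · exact h'
  · exact absurd h' (not_le.mpr h)

lemma D_sum {r : ℕ} {ι : Type*} [DecidableEq ι] (s : Finset ι) (f : ι → Fin r → RatFunc Kb)
    (hd : ∀ i ∈ s, ∀ j ∈ s, i ≠ j → D r (f i) ≠ D r (f j)) :
    D r (∑ i ∈ s, f i) = s.sup fun i => D r (f i) := by
  induction s using Finset.induction_on with
  | empty => simp [D_eq_bot_iff]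
  | @insert a s ha ih =>
    have hd' : ∀ i ∈ s, ∀ j ∈ s, i ≠ j → D r (f i) ≠ D r (f j) := fun i hi j hj =>
      hd i (Finset.mem_insert_of_mem hi) j (Finset.mem_insert_of_mem hj)
    rw [Finset.sum_insert ha, Finset.sup_insert, ← ih hd']
    rcases s.eq_empty_or_nonempty with rfl | hs
    · rw [Finset.sum_empty, add_zero, D_eq_bot_iff.2 rfl, sup_bot_eq]
    · obtain ⟨j0, hj0, hj0e⟩ := Finset.exists_mem_eq_sup s hs (fun i => D r (f i))
      have hne : D r (f a) ≠ D r (∑ i ∈ s, f i) := by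
        rw [ih hd', hj0e]
        exact hd a (Finset.mem_insert_self a s) j0 (Finset.mem_insert_of_mem hj0)
          (fun h => ha (h ▸ hj0))
      rcases lt_or_gt_of_ne hne with h | h
      · rw [D_add_eq h, max_eq_right h.le]
      · rw [add_comm, D_add_eq h, max_eq_left h.le]

lemma D_smul {r : ℕ} (hr : 0 < r) {c : RatFunc Kb} (hc : c ≠ 0) (v : Fin r → RatFunc Kb) :
    D r (c • v) = ((r * c.intDegree : ℤ) : WithBot ℤ) + D r v := by
  have hco : ∀ i : Fin r, wdeg r i.1 ((c • v) i) =
      ((r * c.intDegree : ℤ) : WithBot ℤ) + wdeg r i.1 (v i) := fun i => by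
    rw [Pi.smul_apply, smul_eq_mul]
    exact wdeg_smul _ _ hc _
  obtain ⟨i0, hi0⟩ := D_exists hr v
  refine le_antisymm (D_le fun i => ?_) ?_
  · rw [hco i]
    exact add_le_add le_rfl (le_D v i)
  · rw [hi0, ← hco i0]
    exact le_D _ i0

section Phi

variable (r : ℕ) (θ : Kb) (κtw : Fin r → Kb) (σK : RatFunc Kb ≃+* RatFunc Kb)

/-- the σ-action on coordinates. -/
def phi (v : Fin r → RatFunc Kb) : Fin r → RatFunc Kb :=
  (PhiRho r θ κtw).transpose.mulVec fun i => σK (v i)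

lemma phi_apply (v : Fin r → RatFunc Kb) (i : Fin r) :
    phi r θ κtw σK v i = ∑ j : Fin r, PhiRho r θ κtw j i * σK (v j) := by
  simp [phi, Matrix.mulVec, dotProduct, Matrix.transpose_apply]

lemma phi_coord_zero (hr : 0 < r) (v : Fin r → RatFunc Kb) :
    phi r θ κtw σK v ⟨0, hr⟩ =
      (RatFunc.X - RatFunc.C θ) * σK (v ⟨r - 1, by omega⟩) := by
  rw [phi_apply]
  rw [Finset.sum_eq_single (⟨r - 1, by omega⟩ : Fin r)]
  · congr 1
    show PhiRho r θ κtw ⟨r - 1, _⟩ ⟨0, hr⟩ = _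
    simp only [PhiRho, Fin.val_mk]
    rw [if_neg (by omega), if_pos trivial, if_pos trivial]
  · intro j _ hj
    have hj1 : j.1 ≠ r - 1 := fun h => hj (Fin.ext (by simp only [Fin.val_mk]; omega))
    show PhiRho r θ κtw j ⟨0, hr⟩ * _ = 0
    simp only [PhiRho, Fin.val_mk]
    rw [if_neg (by omega), if_neg hj1, zero_mul]
  · intro h
    exact absurd (Finset.mem_univ _) h

lemma phi_coord_pos (v : Fin r → RatFunc Kb) (i : Fin r) (hi : 0 < i.1) :
    phi r θ κtw σK v i =
      σK (v ⟨i.1 - 1, by omega⟩) -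
        RatFunc.C (κtw ⟨i.1 - 1, by omega⟩) * σK (v ⟨r - 1, by omega⟩) := by
  have hilt : i.1 < r := i.isLt
  have hr2 : 2 ≤ r := by omega
  have ha : (⟨i.1 - 1, by omega⟩ : Fin r) ≠ ⟨r - 1, by omega⟩ := by
    intro h
    rw [Fin.mk.injEq] at h
    omega
  rw [phi_apply]
  have key : ∀ j : Fin r, PhiRho r θ κtw j i * σK (v j) =
      (if j = (⟨i.1 - 1, by omega⟩ : Fin r) then σK (v ⟨i.1 - 1, by omega⟩) else 0) +
      (if j = (⟨r - 1, by omega⟩ : Fin r) then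
          - RatFunc.C (κtw ⟨i.1 - 1, by omega⟩) * σK (v ⟨r - 1, by omega⟩) else 0) := by
    intro j
    by_cases h1 : j = (⟨i.1 - 1, by omega⟩ : Fin r)
    · subst h1
      rw [if_pos rfl, if_neg ha, add_zero]
      simp only [PhiRho, Fin.val_mk]
      rw [if_pos (by omega), one_mul]
    · by_cases h2 : j = (⟨r - 1, by omega⟩ : Fin r)
      · subst h2
        rw [if_neg h1, if_pos rfl, zero_add]
        simp only [PhiRho, Fin.val_mk]
        rw [if_neg (by omega), if_pos trivial, if_neg (by omega), neg_mul]
      · rw [if_neg h1, if_neg h2, add_zero]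
        have hj1 : ¬ (j.1 + 1 = i.1) := by
          intro h
          exact h1 (Fin.ext (by simp only [Fin.val_mk]; omega))
        have hj2 : ¬ (j.1 = r - 1) := by
          intro h
          exact h2 (Fin.ext (by simp only [Fin.val_mk]; omega))
        simp only [PhiRho]
        rw [if_neg hj1, if_neg hj2, zero_mul]
  rw [Finset.sum_congr rfl fun j _ => key j, Finset.sum_add_distrib,
    Finset.sum_ite_eq' Finset.univ, Finset.sum_ite_eq' Finset.univ,
    if_pos (Finset.mem_univ _), if_pos (Finset.mem_univ _)]
  ring

variable {r θ κtw σK}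

lemma D_phi (hr : 0 < r) (hσ : ∀ x : RatFunc Kb, (σK x).intDegree = x.intDegree)
    {v : Fin r → RatFunc Kb} (hv : v ≠ 0) :
    D r (phi r θ κtw σK v) = D r v + 1 := by
  have hσ0 : ∀ x : RatFunc Kb, σK x ≠ 0 ↔ x ≠ 0 := fun x =>
    not_congr (EmbeddingLike.map_eq_zero_iff)
  have hrZ : ((r - 1 : ℕ) : ℤ) = (r : ℤ) - 1 := by omega
  obtain ⟨i0, hi0⟩ := D_exists hr v
  have hvi0 : v i0 ≠ 0 := by
    intro h
    rw [h, wdeg_zero] at hi0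
    exact hv (D_eq_bot_iff.mp hi0)
  set d0 : ℤ := (v i0).intDegree with hd0
  have hDv : D r v = ((r * d0 + i0.1 : ℤ) : WithBot ℤ) := by
    rw [hi0, wdeg_of_ne _ _ hvi0]
  set L : RatFunc Kb := v ⟨r - 1, by omega⟩ with hLdef
  have hLbound : L ≠ 0 → (r : ℤ) * L.intDegree + ((r : ℤ) - 1) ≤ r * d0 + i0.1 := by
    intro hL0
    have h1 := le_D v ⟨r - 1, by omega⟩
    rw [hDv, wdeg_of_ne _ _ hL0, WithBot.coe_le_coe] at h1
    simp only [Fin.val_mk] at h1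
    rw [hrZ] at h1
    exact h1
  have key : D r (phi r θ κtw σK v) = ((r * d0 + i0.1 + 1 : ℤ) : WithBot ℤ) := by
    apply le_antisymm
    · apply D_le
      intro i
      by_cases hi : i.1 = 0
      · have hie : i = ⟨0, hr⟩ := Fin.ext hi
        subst hie
        rw [phi_coord_zero r θ κtw σK hr v, ← hLdef]
        rcases eq_or_ne L 0 with h0 | h0
        · rw [h0, map_zero, mul_zero, wdeg_zero]
          exact bot_le
        · have hσL : σK L ≠ 0 := (hσ0 L).mpr h0
          have hx0 : (RatFunc.X - RatFunc.C θ) * σK L ≠ 0 := mul_ne_zero (Xθ_ne θ) hσL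
          have hdx0 : ((RatFunc.X - RatFunc.C θ) * σK L).intDegree = 1 + L.intDegree := by
            rw [RatFunc.intDegree_mul (Xθ_ne θ) hσL, Xθ_deg, hσ]
          rw [wdeg_of_ne _ _ hx0, hdx0, WithBot.coe_le_coe]
          have hb := hLbound h0
          have hring : (r : ℤ) * (1 + L.intDegree) = r + r * L.intDegree := by ring
          simp only [Fin.val_mk]
          push_cast
          linarith
      · have hi' : 0 < i.1 := by omega
        rw [phi_coord_pos r θ κtw σK v i hi', ← hLdef]
        set a : Fin r := ⟨i.1 - 1, by omega⟩ with hadef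
        set B : RatFunc Kb := RatFunc.C (κtw ⟨i.1 - 1, by omega⟩) * σK L with hBdef
        have hilt : i.1 < r := i.isLt
        rcases eq_or_ne (σK (v a) - B) 0 with hx | hx
        · rw [hx, wdeg_zero]
          exact bot_le
        have hBd : B ≠ 0 → B.intDegree = L.intDegree ∧ L ≠ 0 := by
          intro hB
          have hC : RatFunc.C (κtw ⟨i.1 - 1, by omega⟩) ≠ (0 : RatFunc Kb) :=
            fun h => hB (by rw [hBdef, h, zero_mul])
          have hσL : σK L ≠ 0 := fun h => hB (by rw [hBdef, h, mul_zero])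
          refine ⟨?_, (hσ0 L).mp hσL⟩
          rw [hBdef, RatFunc.intDegree_mul hC hσL, RatFunc.intDegree_C, hσ, zero_add]
        -- weighted-degree bounds on the two summands
        have bound1 : v a ≠ 0 → (r : ℤ) * (v a).intDegree + i.1 ≤ r * d0 + i0.1 + 1 := by
          intro hva
          have h1 := le_D v a
          rw [hDv, wdeg_of_ne _ _ hva, WithBot.coe_le_coe] at h1
          have hav : (a.1 : ℤ) = (i.1 : ℤ) - 1 := by
            rw [hadef]
            simp only [Fin.val_mk]
            omega
          rw [hav] at h1
          linarith
        have bound2 : B ≠ 0 → (r : ℤ) * B.intDegree + i.1 ≤ r * d0 + i0.1 + 1 := by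
          intro hB
          obtain ⟨hBL, hL0⟩ := hBd hB
          have hb := hLbound hL0
          have hile : (i.1 : ℤ) ≤ (r : ℤ) - 1 := by omega
          rw [hBL]
          linarith
        rw [wdeg_of_ne _ _ hx, WithBot.coe_le_coe]
        rcases eq_or_ne (v a) 0 with hva | hva
        · have hσva : σK (v a) = 0 := by rw [hva, map_zero]
          have hB : B ≠ 0 := fun h => hx (by rw [hσva, h, sub_zero])
          have hd : (σK (v a) - B).intDegree = B.intDegree := by
            rw [hσva, zero_sub, RatFunc.intDegree_neg]
          rw [hd]
          exact bound2 hB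
        · have hσva : σK (v a) ≠ 0 := (hσ0 _).mpr hva
          rcases eq_or_ne B 0 with hB | hB
          · rw [hB, sub_zero, hσ]
            exact bound1 hva
          · have hle := RatFunc.intDegree_add_le (neg_ne_zero.2 hB)
              (by rwa [← sub_eq_add_neg])
            rw [← sub_eq_add_neg, RatFunc.intDegree_neg] at hle
            rcases le_max_iff.mp hle with h | h
            · rw [hσ] at h
              linarith [bound1 hva,
                mul_le_mul_of_nonneg_left h (Int.natCast_nonneg r)]
            · linarith [bound2 hB,
                mul_le_mul_of_nonneg_left h (Int.natCast_nonneg r)]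
    · by_cases hc : i0.1 = r - 1
      · have hi0e : i0 = ⟨r - 1, by omega⟩ := Fin.ext hc
        have hLv : L = v i0 := by rw [hLdef, hi0e]
        have hL0 : L ≠ 0 := hLv ▸ hvi0
        have hσL : σK L ≠ 0 := (hσ0 L).mpr hL0
        have hx0 : (RatFunc.X - RatFunc.C θ) * σK L ≠ 0 := mul_ne_zero (Xθ_ne θ) hσL
        have h1 := le_D (phi r θ κtw σK v) ⟨0, hr⟩
        rw [phi_coord_zero r θ κtw σK hr v, ← hLdef] at h1
        refine le_trans (le_of_eq ?_) h1
        rw [wdeg_of_ne _ _ hx0, RatFunc.intDegree_mul (Xθ_ne θ) hσL, Xθ_deg, hσ]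
        have hdL : L.intDegree = d0 := by rw [hLv]
        rw [hdL, WithBot.coe_eq_coe]
        simp only [Fin.val_mk]
        push_cast
        have hcZ : (i0.1 : ℤ) = (r : ℤ) - 1 := by omega
        have hring : (r : ℤ) * (1 + d0) = r + r * d0 := by ring
        linarith
      · have hi0lt : i0.1 < r - 1 := by
          have := i0.isLt
          omega
        set i : Fin r := ⟨i0.1 + 1, by omega⟩ with hidef
        have h1 := le_D (phi r θ κtw σK v) i
        have hipos : 0 < i.1 := by
          rw [hidef]
          simp only [Fin.val_mk]
          omega
        rw [phi_coord_pos r θ κtw σK v i hipos, ← hLdef] at h1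
        have haeq : (⟨i.1 - 1, by omega⟩ : Fin r) = i0 := by
          apply Fin.ext
          simp only [hidef, Fin.val_mk]
          omega
        rw [haeq] at h1
        have hσvi0 : σK (v i0) ≠ 0 := (hσ0 _).mpr hvi0
        have hBsmall : ∀ c : Kb, RatFunc.C c * σK L = 0 ∨
            (RatFunc.C c * σK L ≠ 0 ∧
              (RatFunc.C c * σK L).intDegree < (σK (v i0)).intDegree) := by
          intro c
          rcases eq_or_ne (RatFunc.C c * σK L) 0 with hB | hB
          · exact Or.inl hB
          · right
            refine ⟨hB, ?_⟩
            have hC : RatFunc.C c ≠ (0 : RatFunc Kb) :=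
              fun h => hB (by rw [h, zero_mul])
            have hσL : σK L ≠ 0 := fun h => hB (by rw [h, mul_zero])
            have hL0 : L ≠ 0 := (hσ0 L).mp hσL
            have hb := hLbound hL0
            rw [RatFunc.intDegree_mul hC hσL, RatFunc.intDegree_C, hσ, hσ, zero_add]
            have hmul : (r : ℤ) * L.intDegree < r * d0 := by
              have : (i0.1 : ℤ) ≤ (r : ℤ) - 2 := by omega
              linarith
            have hrpos : (0 : ℤ) < r := by exact_mod_cast hr
            exact lt_of_mul_lt_mul_left hmul (le_of_lt hrpos)
        obtain ⟨hxne, hxd⟩ := intDegree_sub_eq hσvi0 (hBsmall _)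
        refine le_trans (le_of_eq ?_) h1
        rw [wdeg_of_ne _ _ hxne, hxd, hσ, WithBot.coe_eq_coe]
        simp only [hidef, Fin.val_mk]
        push_cast
        linarith
  rw [key, hDv, ← WithBot.coe_one, ← WithBot.coe_add]

end Phi

end Statement5Aux


theorem statement5
    -- q a power of the prime p
    (p mq q : ℕ) (hp : p.Prime) (hmq : 0 < mq) (hq : q = p ^ mq)
    -- k̄ : the algebraic closure of k = 𝔽q(θ); it is algebraically closed of char p
    (Kb : Type) [Field Kb] [CharP Kb p] [IsAlgClosed Kb]
    (θ : Kb)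
    -- θ is transcendental over 𝔽q = {c : c^q = c}
    (hθtr : ∀ f : Polynomial Kb, (∀ i, (f.coeff i) ^ q = f.coeff i) → f.eval θ = 0 → f = 0)
    -- every element of k̄ is algebraic over 𝔽q(θ)
    (halg : ∀ x : Kb, ∃ f : Polynomial Kb, f ≠ 0 ∧
      (∀ i, ∃ gnum gden : Polynomial Kb,
        (∀ j, (gnum.coeff j) ^ q = gnum.coeff j) ∧ (∀ j, (gden.coeff j) ^ q = gden.coeff j) ∧
        gden.eval θ ≠ 0 ∧ f.coeff i * gden.eval θ = gnum.eval θ) ∧ f.eval x = 0)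
    -- ρ_t = θ + κ₁τ + ⋯ + κ_rτ^r with κ_r = 1
    (r : ℕ) (hr : 0 < r)
    (κ : Fin r → Kb) (hκr : κ ⟨r - 1, by omega⟩ = 1)
    -- the inverse twists κ_{j+1}^{(−(j+1))}
    (κtw : Fin r → Kb) (hκtw : ∀ j : Fin r, (κtw j) ^ q ^ (j.1 + 1) = κ j)
    -- σ_K : the inverse-twisting automorphism f ↦ f^{(−1)} of k̄(t); it is characterized by
    -- σ_K(f^{(1)}) = f on polynomials, where f^{(1)} is the coefficientwise q-th power twist
    (frobKb : Kb →+* Kb) (hfrob : ∀ x, frobKb x = x ^ q)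
    (σK : RatFunc Kb ≃+* RatFunc Kb)
    (hσK : ∀ f : Polynomial Kb,
      σK (algebraMap (Polynomial Kb) (RatFunc Kb) (f.map frobKb)) =
        algebraMap (Polynomial Kb) (RatFunc Kb) f) :
    -- conclusion : M_ρ is simple as a left k̄(t)[σ,σ^{-1}]-module
    ∀ W : Submodule (RatFunc Kb) (Fin r → RatFunc Kb),
      ((fun v : Fin r → RatFunc Kb =>
          (PhiRho r θ κtw).transpose.mulVec (fun i => σK (v i))) '' W = W) →
      W = ⊥ ∨ W = ⊤ := by
  classical
  -- `σK` preserves the degree of rational functions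
  have hq0 : 0 < q := by
    subst hq
    exact pow_pos hp.pos _
  have hfs : Function.Surjective frobKb := by
    intro y
    obtain ⟨z, hz⟩ := IsAlgClosed.exists_pow_nat_eq y hq0
    exact ⟨z, by rw [hfrob, hz]⟩
  have hmaps : ∀ h : Polynomial Kb, ∃ g : Polynomial Kb,
      g.map frobKb = h ∧ g.natDegree = h.natDegree := by
    intro h
    obtain ⟨g, hg⟩ := Polynomial.map_surjective frobKb hfs h
    exact ⟨g, hg, by rw [← hg, Polynomial.natDegree_map_eq_of_injective frobKb.injective]⟩
  have hσdeg : ∀ x : RatFunc Kb, (σK x).intDegree = x.intDegree := by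
    intro x
    rcases eq_or_ne x 0 with rfl | hx
    · rw [map_zero]
    · obtain ⟨gn, hgn, hdn⟩ := hmaps x.num
      obtain ⟨gd, hgd, hdd⟩ := hmaps x.denom
      have hgn0 : gn ≠ 0 := by
        intro h
        exact RatFunc.num_ne_zero hx (by rw [← hgn, h, Polynomial.map_zero])
      have hgd0 : gd ≠ 0 := by
        intro h
        exact x.denom_ne_zero (by rw [← hgd, h, Polynomial.map_zero])
      have hx' : σK x = algebraMap (Polynomial Kb) (RatFunc Kb) gn /
          algebraMap (Polynomial Kb) (RatFunc Kb) gd := by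
        conv_lhs => rw [← RatFunc.num_div_denom x, ← hgn, ← hgd]
        rw [map_div₀, hσK, hσK]
      rw [hx', Statement5Aux.intDegree_div_polys _ _ hgn0 hgd0, hdn, hdd, RatFunc.intDegree]
  intro W hW
  rcases eq_or_ne W ⊥ with hbot | hbot
  · exact Or.inl hbot
  right
  obtain ⟨w, hwW, hw0⟩ := (Submodule.ne_bot_iff W).mp hbot
  have hstab : ∀ x ∈ W, Statement5Aux.phi r θ κtw σK x ∈ W := by
    intro x hx
    have hmem : Statement5Aux.phi r θ κtw σK x ∈
        (fun v : Fin r → RatFunc Kb =>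
          (PhiRho r θ κtw).transpose.mulVec (fun i => σK (v i))) '' W :=
      Set.mem_image_of_mem _ hx
    rwa [hW] at hmem
  set u : ℕ → (Fin r → RatFunc Kb) := fun n => (Statement5Aux.phi r θ κtw σK)^[n] w with hudef
  obtain ⟨dw, hdw⟩ : ∃ dw : ℤ, Statement5Aux.D r w = (dw : WithBot ℤ) := by
    cases hD : Statement5Aux.D r w with
    | bot => exact absurd (Statement5Aux.D_eq_bot_iff.mp hD) hw0
    | coe d => exact ⟨d, rfl⟩
  have hu : ∀ n : ℕ, u n ∈ W ∧ u n ≠ 0 ∧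
      Statement5Aux.D r (u n) = ((dw + n : ℤ) : WithBot ℤ) := by
    intro n
    induction n with
    | zero =>
      refine ⟨hwW, hw0, ?_⟩
      rw [hudef]
      simpa using hdw
    | succ n ih =>
      obtain ⟨hmem, hne, hdeg⟩ := ih
      have hstep : u (n + 1) = Statement5Aux.phi r θ κtw σK (u n) := by
        rw [hudef]
        exact Function.iterate_succ_apply' _ n w
      have hdeg' : Statement5Aux.D r (u (n + 1)) = ((dw + (n + 1) : ℤ) : WithBot ℤ) := by
        rw [hstep, Statement5Aux.D_phi hr hσdeg hne, hdeg, ← WithBot.coe_one, ← WithBot.coe_add]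
        congr 1
        push_cast
        ring
      refine ⟨?_, ?_, hdeg'⟩
      · rw [hstep]
        exact hstab _ hmem
      · intro h
        rw [h, Statement5Aux.D_eq_bot_iff.mpr rfl] at hdeg'
        exact WithBot.bot_ne_coe hdeg'
  have hlin : LinearIndependent (RatFunc Kb) (fun n : Fin r => u n.1) := by
    rw [Fintype.linearIndependent_iff]
    intro c hc
    by_contra hex
    push_neg at hex
    obtain ⟨i1, hi1⟩ := hex
    set s : Finset (Fin r) := Finset.univ.filter (fun i => c i ≠ 0) with hsdef
    have hs : s.Nonempty := ⟨i1, by simp [hsdef, hi1]⟩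
    have hsum : ∑ i ∈ s, c i • u i.1 = 0 := by
      rw [hsdef, ← hc]
      apply Finset.sum_subset (Finset.filter_subset _ _)
      intro x _ hx
      rw [Finset.mem_filter] at hx
      push_neg at hx
      rw [hx (Finset.mem_univ x), zero_smul]
    have hDs : ∀ i ∈ s, Statement5Aux.D r (c i • u i.1) =
        ((r * (c i).intDegree + dw + i.1 : ℤ) : WithBot ℤ) := by
      intro i hi
      have hci : c i ≠ 0 := by
        have := Finset.mem_filter.mp (hsdef ▸ hi)
        exact this.2
      rw [Statement5Aux.D_smul hr hci, (hu i.1).2.2, ← WithBot.coe_add]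
      congr 1
      push_cast
      ring
    have hdist : ∀ i ∈ s, ∀ j ∈ s, i ≠ j →
        Statement5Aux.D r (c i • u i.1) ≠ Statement5Aux.D r (c j • u j.1) := by
      intro i hi j hj hij
      rw [hDs i hi, hDs j hj]
      intro h
      rw [WithBot.coe_eq_coe] at h
      have hij' : (i.1 : ℤ) ≠ j.1 := by
        intro h'
        exact hij (Fin.ext (by exact_mod_cast h'))
      have hiℤ : (i.1 : ℤ) < r := by exact_mod_cast i.isLt
      have hjℤ : (j.1 : ℤ) < r := by exact_mod_cast j.isLt
      have h0i : (0 : ℤ) ≤ i.1 := Int.natCast_nonneg _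
      have h0j : (0 : ℤ) ≤ j.1 := Int.natCast_nonneg _
      have hlin2 : (r : ℤ) * ((c j).intDegree - (c i).intDegree) = (i.1 : ℤ) - j.1 := by
        have hexp1 : (r : ℤ) * ((c j).intDegree - (c i).intDegree) =
            r * (c j).intDegree - r * (c i).intDegree := by ring
        linarith [hexp1]
      set m : ℤ := (c j).intDegree - (c i).intDegree with hmdef
      have hr0 : (0 : ℤ) ≤ r := Int.natCast_nonneg r
      rcases lt_trichotomy m 0 with hm | hm | hm
      · have h2 : (r : ℤ) * m ≤ r * (-1) :=
          mul_le_mul_of_nonneg_left (by omega) hr0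
        have h3 : (r : ℤ) * (-1) = -r := by ring
        linarith
      · rw [hm, mul_zero] at hlin2
        exact hij' (by linarith)
      · have h2 : (r : ℤ) * 1 ≤ r * m :=
          mul_le_mul_of_nonneg_left (by omega) hr0
        have h3 : (r : ℤ) * 1 = r := by ring
        linarith
    have hDsum := Statement5Aux.D_sum s (fun i => c i • u i.1) hdist
    rw [hsum] at hDsum
    obtain ⟨j0, hj0, hj0e⟩ := Finset.exists_mem_eq_sup s hs
      (fun i => Statement5Aux.D r (c i • u i.1))
    rw [Statement5Aux.D_eq_bot_iff.mpr rfl, hj0e, hDs j0 hj0] at hDsum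
    exact WithBot.bot_ne_coe hDsum
  haveI : Nonempty (Fin r) := ⟨⟨0, hr⟩⟩
  have hcard : Fintype.card (Fin r) = Module.finrank (RatFunc Kb) (Fin r → RatFunc Kb) := by
    rw [Fintype.card_fin, Module.finrank_fin_fun]
  have hspan := hlin.span_eq_top_of_card_eq_finrank hcard
  rw [eq_top_iff, ← hspan, Submodule.span_le]
  rintro x ⟨n, rfl⟩
  exact (hu n.1).1
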